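/- Let A be a symmetric invertible 2n×2n real matrix, b(X,Y) = (AX,Y), and let g = ℝX_0 ⊕ ℝ^{2n} ⊕ ℝX_{n+1} be the solvable Lie algebra with bracket [(s,u,t),(s',u',t')] = (b(JAu,u'), t·JAu' − t'·JAu, 0). Then the symmetric bilinear form ⟨(s,u,t),(s',u',t')⟩ = b(u,u') + s t' + s' t is nondegenerate and ad-invariant on g: ⟨[Z,W],V⟩ + ⟨W,[Z,V]⟩ = 0 for all Z, W, V ∈ g. -/
import Mathlib


open Matrix

noncomputable section

/-- The canonical complex structure `J = [[0, -I],[I, 0]]` on `ℝ^{2n}`. -/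
def Jmat (n : ℕ) : Matrix (Fin n ⊕ Fin n) (Fin n ⊕ Fin n) ℝ :=
  Matrix.fromBlocks 0 (-1) 1 0

/-- The bilinear form `b(X,Y) = (AX, Y)` on `ℝ^{2n}`. -/
def bForm (n : ℕ) (A : Matrix (Fin n ⊕ Fin n) (Fin n ⊕ Fin n) ℝ)
    (X Y : (Fin n ⊕ Fin n) → ℝ) : ℝ :=
  (A *ᵥ X) ⬝ᵥ Y

/-- The bracket on `g = ℝX₀ ⊕ ℝ^{2n} ⊕ ℝX_{n+1}` (elements written `(s, u, t)`):
`[(s,u,t),(s',u',t')] = (b(JAu, u'), t·JAu' - t'·JAu, 0)`. -/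
def solvBr (n : ℕ) (A : Matrix (Fin n ⊕ Fin n) (Fin n ⊕ Fin n) ℝ)
    (Z W : ℝ × ((Fin n ⊕ Fin n) → ℝ) × ℝ) : ℝ × ((Fin n ⊕ Fin n) → ℝ) × ℝ :=
  (bForm n A ((Jmat n * A) *ᵥ Z.2.1) W.2.1,
   Z.2.2 • ((Jmat n * A) *ᵥ W.2.1) - W.2.2 • ((Jmat n * A) *ᵥ Z.2.1),
   0)

/-- The symmetric bilinear form `⟨(s,u,t),(s',u',t')⟩ = b(u,u') + s t' + s' t`
on `g = ℝX₀ ⊕ ℝ^{2n} ⊕ ℝX_{n+1}`. -/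
def solvMetric (n : ℕ) (A : Matrix (Fin n ⊕ Fin n) (Fin n ⊕ Fin n) ℝ)
    (Z W : ℝ × ((Fin n ⊕ Fin n) → ℝ) × ℝ) : ℝ :=
  bForm n A Z.2.1 W.2.1 + Z.1 * W.2.2 + W.1 * Z.2.2

lemma Jmat_transpose (n : ℕ) : (Jmat n)ᵀ = - Jmat n := by
  simp [Jmat, Matrix.fromBlocks_transpose, Matrix.fromBlocks_neg]

lemma bSymm (n : ℕ) (A : Matrix (Fin n ⊕ Fin n) (Fin n ⊕ Fin n) ℝ) (hA : A.IsSymm)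
    (X Y : (Fin n ⊕ Fin n) → ℝ) : bForm n A X Y = bForm n A Y X := by
  unfold bForm
  rw [dotProduct_comm, dotProduct_mulVec, ← mulVec_transpose, hA.eq]

lemma bSkew (n : ℕ) (A : Matrix (Fin n ⊕ Fin n) (Fin n ⊕ Fin n) ℝ) (hA : A.IsSymm)
    (X Y : (Fin n ⊕ Fin n) → ℝ) :
    bForm n A ((Jmat n * A) *ᵥ X) Y = - bForm n A X ((Jmat n * A) *ᵥ Y) := by
  unfold bForm
  rw [dotProduct_mulVec, ← mulVec_transpose, transpose_mul, Jmat_transpose, hA.eq,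
    mulVec_mulVec, mulVec_mulVec]
  simp [Matrix.mul_assoc, Matrix.mul_neg, Matrix.neg_mul, neg_mulVec]

lemma bAdd1 (n : ℕ) (A : Matrix (Fin n ⊕ Fin n) (Fin n ⊕ Fin n) ℝ)
    (X X' Y : (Fin n ⊕ Fin n) → ℝ) (c c' : ℝ) :
    bForm n A (c • X - c' • X') Y = c * bForm n A X Y - c' * bForm n A X' Y := by
  simp only [bForm, Matrix.mulVec_sub, Matrix.mulVec_smul, sub_dotProduct, smul_dotProduct,
    smul_eq_mul]

/-- For `A` symmetric and invertible, the form
`⟨(s,u,t),(s',u',t')⟩ = b(u,u') + s t' + s' t` is nondegenerate and ad-invariant on the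
solvable Lie algebra `g = ℝX₀ ⊕ ℝ^{2n} ⊕ ℝX_{n+1}`:
`⟨[Z,W],V⟩ + ⟨W,[Z,V]⟩ = 0`. -/
theorem solvable_metric_ad_invariant (n : ℕ)
    (A : Matrix (Fin n ⊕ Fin n) (Fin n ⊕ Fin n) ℝ)
    (hA : A.IsSymm) (hAinv : IsUnit A) :
    (∀ Z : ℝ × ((Fin n ⊕ Fin n) → ℝ) × ℝ,
        (∀ W : ℝ × ((Fin n ⊕ Fin n) → ℝ) × ℝ, solvMetric n A Z W = 0) → Z = 0)
    ∧ (∀ Z W V : ℝ × ((Fin n ⊕ Fin n) → ℝ) × ℝ,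
        solvMetric n A (solvBr n A Z W) V + solvMetric n A W (solvBr n A Z V) = 0) := by
  constructor
  · rintro ⟨s, u, t⟩ h
    have ht : t = 0 := by simpa [solvMetric, bForm] using h (1, 0, 0)
    have hs : s = 0 := by simpa [solvMetric, bForm] using h (0, 0, 1)
    have hu : A *ᵥ u = 0 := by
      have := h (0, A *ᵥ u, 0)
      simp [solvMetric, bForm] at this
      exact this
    have hdet : IsUnit A.det := (Matrix.isUnit_iff_isUnit_det A).mp hAinv
    have hu0 : u = 0 := by
      have := congrArg (fun v => A⁻¹ *ᵥ v) hu
      simpa [mulVec_mulVec, Matrix.nonsing_inv_mul A hdet] using this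
    simp [hs, ht, hu0]
  · rintro ⟨s, u, t⟩ ⟨s', u', t'⟩ ⟨s'', u'', t''⟩
    simp only [solvMetric, solvBr, bAdd1]
    have h1 := bSkew n A hA u' u''
    have h2 := bSkew n A hA u u''
    have h3 := bSkew n A hA u u'
    have h5 := bSymm n A hA u' (t • ((Jmat n * A) *ᵥ u'') - t'' • ((Jmat n * A) *ᵥ u))
    have h6 := bSymm n A hA ((Jmat n * A) *ᵥ u'') u'
    rw [h5, bAdd1, h1, h2, h3, h6]
    ring
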